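/- Let 0 ≤ i ≤ j ≤ L be integers with L ≥ 1 and let β₀ > β₂ > 1 be real. Define ψ : {0,2}^ℤ → ℝ by ψ(ξ) = log β₀ if ξ₀ = 0 and ψ(ξ) = log β₂ if ξ₀ = 2, and set a⁻ = (j log β₂ + (L−j) log β₀)/L and a⁺ = (i log β₂ + (L−i) log β₀)/L. Then for every α ∈ [a⁻, a⁺] there exists ξ ∈ H(i,j,L) such that lim_{n→∞} (1/n) Σ_{m=0}^{n−1} ψ(σ^m ξ) = α. -/

import Mathlib

open Filter

/-!
Bi-infinite sequences over the alphabet {0,2} are modeled as `ξ : ℤ → Bool`, where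
`true` represents the symbol `2` and `false` represents the symbol `0`.
-/

/-- Number of occurrences of the symbol `2` in the window `ξ_m ξ_{m+1} ⋯ ξ_{m+L-1}`. -/
def zwinCount (ξ : ℤ → Bool) (m : ℤ) (L : ℕ) : ℕ :=
  ((Finset.range L).filter fun r : ℕ => ξ (m + (r : ℤ)) = true).card

/-- The subshift `H(i,j,L)`. -/
def Hset (i j L : ℕ) : Set (ℤ → Bool) :=
  {ξ | ∀ m : ℤ, i ≤ zwinCount ξ m L ∧ zwinCount ξ m L ≤ j}

/-- The left shift on `{0,2}^ℤ`. -/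
def shift (ξ : ℤ → Bool) : ℤ → Bool := fun n => ξ (n + 1)

lemma shift_iterate (m : ℕ) (η : ℤ → Bool) (k : ℤ) : shift^[m] η k = η (k + m) := by
  induction m generalizing η k with
  | zero => simp
  | succ m ih =>
      rw [Function.iterate_succ_apply, ih (shift η) k]
      show η (k + m + 1) = _
      congr 1
      push_cast
      ring

set_option maxHeartbeats 2000000 in
/-- every value `α` in the interval `[a⁻, a⁺]` is realized as the limit
Birkhoff average of the potential `ψ` (with `ψ(ξ) = log β₀` if `ξ₀ = 0` and
`ψ(ξ) = log β₂` if `ξ₀ = 2`) at some point `ξ ∈ H(i,j,L)`. -/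
theorem birkhoff_average_realized
    (i j L : ℕ) (hL : 1 ≤ L) (hij : i ≤ j) (hjL : j ≤ L)
    (β₀ β₂ : ℝ) (hβ2 : 1 < β₂) (hβ : β₂ < β₀)
    (ψ : (ℤ → Bool) → ℝ)
    (hψ : ∀ ξ : ℤ → Bool, ψ ξ = if ξ 0 = true then Real.log β₂ else Real.log β₀)
    (am ap : ℝ)
    (ham : am = ((j : ℝ) * Real.log β₂ + ((L - j : ℕ) : ℝ) * Real.log β₀) / (L : ℝ))
    (hap : ap = ((i : ℝ) * Real.log β₂ + ((L - i : ℕ) : ℝ) * Real.log β₀) / (L : ℝ))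
    (α : ℝ) (hα : α ∈ Set.Icc am ap) :
    ∃ ξ ∈ Hset i j L,
      Tendsto (fun n : ℕ => (∑ m ∈ Finset.range n, ψ (shift^[m] ξ)) / n)
        atTop (nhds α) := by
  obtain ⟨hαm, hαp⟩ := hα
  have hβ2pos : (0:ℝ) < β₂ := by linarith
  have hlog2 : (0:ℝ) < Real.log β₂ := Real.log_pos hβ2
  have hlog : Real.log β₂ < Real.log β₀ := Real.log_lt_log hβ2pos hβ
  set D : ℝ := Real.log β₀ - Real.log β₂ with hD
  have hDpos : 0 < D := by simp only [hD]; linarith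
  set δ : ℝ := (Real.log β₀ - α) / D with hδ
  have hLpos : (0:ℝ) < (L:ℝ) := by exact_mod_cast hL
  have hjcast : ((L - j : ℕ) : ℝ) = (L:ℝ) - (j:ℝ) := by
    rw [Nat.cast_sub hjL]
  have hicast : ((L - i : ℕ) : ℝ) = (L:ℝ) - (i:ℝ) := by
    rw [Nat.cast_sub (hij.trans hjL)]
  -- Key bounds: i ≤ δ L ≤ j
  have hiδ : (i:ℝ) ≤ δ * L := by
    rw [hap, hicast] at hαp
    rw [le_div_iff₀ hLpos] at hαp
    rw [hδ, div_mul_eq_mul_div, le_div_iff₀ hDpos]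
    simp only [hD]
    nlinarith
  have hjδ : δ * L ≤ (j:ℝ) := by
    rw [ham, hjcast] at hαm
    rw [div_le_iff₀ hLpos] at hαm
    rw [hδ, div_mul_eq_mul_div, div_le_iff₀ hDpos]
    simp only [hD]
    nlinarith
  have hδ0 : 0 ≤ δ := by
    nlinarith [Nat.cast_nonneg (α := ℝ) i]
  have hδ1 : δ ≤ 1 := by
    have : (j:ℝ) ≤ L := by exact_mod_cast hjL
    nlinarith
  have hαδ : α = Real.log β₀ - δ * D := by
    rw [hδ, div_mul_cancel₀ _ (ne_of_gt hDpos)]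
    ring
  -- The Beatty / Sturmian sequence with density δ
  set f : ℤ → ℤ := fun m => ⌊δ * (m:ℝ)⌋ with hf
  set ξ : ℤ → Bool := fun m => decide (f m < f (m + 1)) with hξ
  have hstep : ∀ m : ℤ, f m ≤ f (m + 1) ∧ f (m + 1) ≤ f m + 1 := by
    intro m
    constructor
    · apply Int.floor_le_floor
      push_cast
      nlinarith
    · have h1 : δ * ((m:ℝ) + 1) ≤ δ * (m:ℝ) + 1 := by nlinarith
      calc f (m + 1) = ⌊δ * ((m:ℝ) + 1)⌋ := by simp only [hf]; push_cast; ring_nf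
        _ ≤ ⌊δ * (m:ℝ) + 1⌋ := Int.floor_le_floor h1
        _ = f m + 1 := by rw [← Int.floor_add_one]
  have hb : ∀ m : ℤ, (ξ m = true) ↔ f m < f (m + 1) := by
    intro m
    simp [hξ]
  have hind : ∀ m : ℤ, (if ξ m = true then (1:ℤ) else 0) = f (m + 1) - f m := by
    intro m
    obtain ⟨h1, h2⟩ := hstep m
    split_ifs with h
    · rw [hb] at h; omega
    · rw [hb] at h; omega
  have htel : ∀ (m : ℤ) (n : ℕ),
      ∑ r ∈ Finset.range n, (if ξ (m + (r:ℤ)) = true then (1:ℤ) else 0) = f (m + n) - f m := by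
    intro m n
    have : ∀ r ∈ Finset.range n,
        (if ξ (m + (r:ℤ)) = true then (1:ℤ) else 0)
          = (fun s : ℕ => f (m + (s:ℤ))) (r + 1) - (fun s : ℕ => f (m + (s:ℤ))) r := by
      intro r _
      rw [hind (m + r)]
      simp only
      congr 2
      push_cast
      ring
    rw [Finset.sum_congr rfl this, Finset.sum_range_sub (fun s : ℕ => f (m + (s:ℤ)))]
    simp
  have hcount : ∀ m : ℤ, (zwinCount ξ m L : ℤ) = f (m + L) - f m := by
    intro m
    rw [zwinCount, Finset.card_filter]
    push_cast
    rw [← htel m L]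
  refine ⟨ξ, ?_, ?_⟩
  · -- membership in Hset
    intro m
    have h1 : (i:ℤ) ≤ f (m + L) - f m := by
      have hle : δ * (m:ℝ) + (i:ℝ) ≤ δ * ((m + (L:ℤ) : ℤ):ℝ) := by
        push_cast
        nlinarith
      have := Int.floor_le_floor hle
      rw [Int.floor_add_natCast] at this
      simp only [hf]
      omega
    have h2 : f (m + L) - f m ≤ (j:ℤ) := by
      have hle : δ * ((m + (L:ℤ) : ℤ):ℝ) ≤ δ * (m:ℝ) + (j:ℝ) := by
        push_cast
        nlinarith
      have := Int.floor_le_floor hle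
      rw [Int.floor_add_natCast] at this
      simp only [hf]
      omega
    have hc := hcount m
    constructor
    · omega
    · omega
  · -- the Birkhoff limit
    have hf0 : f 0 = 0 := by simp [hf]
    have hsum : ∀ n : ℕ, ∑ m ∈ Finset.range n, ψ (shift^[m] ξ)
        = (n:ℝ) * Real.log β₀ - ((f n : ℤ):ℝ) * D := by
      intro n
      have hterm : ∀ m ∈ Finset.range n, ψ (shift^[m] ξ)
          = Real.log β₀ - ((if ξ ((0:ℤ) + (m:ℤ)) = true then (1:ℤ) else 0) : ℝ) * D := by
        intro m _
        rw [hψ, shift_iterate m ξ 0]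
        split_ifs <;> simp [hD] <;> ring
      rw [Finset.sum_congr rfl hterm, Finset.sum_sub_distrib, Finset.sum_const,
        Finset.card_range, ← Finset.sum_mul, nsmul_eq_mul]
      congr 1
      congr 1
      have := htel 0 n
      have hcast : ∑ m ∈ Finset.range n, ((if ξ ((0:ℤ) + (m:ℤ)) = true then (1:ℤ) else 0) : ℝ)
          = (((∑ m ∈ Finset.range n, (if ξ ((0:ℤ) + (m:ℤ)) = true then (1:ℤ) else 0)) : ℤ) : ℝ) := by
        push_cast
        rfl
      rw [hcast, this, hf0]
      norm_num
    -- f n / n → δ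
    have hfrac : Tendsto (fun n : ℕ => ((f n : ℤ):ℝ) / n) atTop (nhds δ) := by
      apply tendsto_of_tendsto_of_tendsto_of_le_of_le'
        (g := fun n : ℕ => δ - 1 / (n:ℝ)) (h := fun _ : ℕ => δ)
      · simpa using (tendsto_const_nhds (x := δ) (f := atTop)).sub
          tendsto_one_div_atTop_nhds_zero_nat
      · exact tendsto_const_nhds
      · filter_upwards [eventually_ge_atTop 1] with n hn
        have hnpos : (0:ℝ) < n := by exact_mod_cast hn
        have : δ * ((n:ℤ):ℝ) - 1 < ((f (n:ℤ) : ℤ):ℝ) := by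
          simpa [hf] using Int.sub_one_lt_floor (δ * ((n:ℤ):ℝ))
        have hone : (1 / (n:ℝ)) * n = 1 := by field_simp
        rw [le_div_iff₀ hnpos]
        push_cast at this
        nlinarith
      · filter_upwards [eventually_ge_atTop 1] with n hn
        have hnpos : (0:ℝ) < n := by exact_mod_cast hn
        have : ((f (n:ℤ) : ℤ):ℝ) ≤ δ * ((n:ℤ):ℝ) := by
          simpa [hf] using Int.floor_le (δ * ((n:ℤ):ℝ))
        rw [div_le_iff₀ hnpos]
        push_cast at this ⊢
        nlinarith
    have hlim : Tendsto (fun n : ℕ => Real.log β₀ - (((f n : ℤ):ℝ) / n) * D)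
        atTop (nhds α) := by
      rw [hαδ]
      exact (tendsto_const_nhds.sub (hfrac.mul_const D))
    apply hlim.congr'
    filter_upwards [eventually_ge_atTop 1] with n hn
    have hnpos : (0:ℝ) < n := by exact_mod_cast hn
    rw [hsum n]
    field_simp
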